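/- Let $\varepsilon, \mu, c, \kappa > 0$ with $\kappa > 0$, and for $\lambda > 0$ define $F(t) = \varepsilon e^{-\mu t} - c\lambda(e^{-\lambda t} - e^{\lambda t}) - \lambda^2(e^{-\lambda t} + e^{\lambda t}) + \kappa(e^{-\lambda t} + e^{\lambda t} - 2)$ for $t \geq 0$. If $0 < \lambda < \min\{\sqrt{\varepsilon/2}, \sqrt{\varepsilon\mu/(2c)}, \sqrt{\kappa}\}$, then $F(0) > 0$, $F'(0) < 0$, and $F''(t) > 0$ for all $t \geq 0$. -/

import Mathlib

open Real

lemma hde_aux (a x : ℝ) : HasDerivAt (fun t => Real.exp (a*t)) (a * Real.exp (a*x)) x := by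
  have h : HasDerivAt (fun t : ℝ => a*t) a x := by
    simpa using (hasDerivAt_id x).const_mul a
  simpa [mul_comm] using h.exp

theorem stmt3 (ε μ c κ l : ℝ) (hε : 0 < ε) (hμ : 0 < μ) (hc : 0 < c) (hκ : 0 < κ)
    (hl : 0 < l)
    (hl' : l < min (Real.sqrt (ε / 2)) (min (Real.sqrt (ε * μ / (2 * c))) (Real.sqrt κ)))
    (F : ℝ → ℝ)
    (hF : ∀ t : ℝ, F t =
      ε * Real.exp (-(μ * t)) - c * l * (Real.exp (-(l * t)) - Real.exp (l * t))
        - l ^ 2 * (Real.exp (-(l * t)) + Real.exp (l * t))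
        + κ * (Real.exp (-(l * t)) + Real.exp (l * t) - 2)) :
    F 0 > 0 ∧ deriv F 0 < 0 ∧ ∀ t ≥ (0:ℝ), deriv (deriv F) t > 0 := by
  have hκl : l ^ 2 < κ := by
    have h1 : l < Real.sqrt κ := lt_of_lt_of_le hl'
      (le_trans (min_le_right _ _) (min_le_right _ _))
    exact (Real.lt_sqrt hl.le).mp h1
  have hεl : l ^ 2 < ε / 2 := by
    have h1 : l < Real.sqrt (ε / 2) := lt_of_lt_of_le hl' (min_le_left _ _)
    exact (Real.lt_sqrt hl.le).mp h1
  have hcl : l ^ 2 < ε * μ / (2 * c) := by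
    have h1 : l < Real.sqrt (ε * μ / (2 * c)) := lt_of_lt_of_le hl'
      (le_trans (min_le_right _ _) (min_le_left _ _))
    exact (Real.lt_sqrt hl.le).mp h1
  have hF' : ∀ x : ℝ, HasDerivAt F
      (-(ε*μ)*Real.exp (-(μ*x)) + c*l^2*(Real.exp (-(l*x)) + Real.exp (l*x))
        + (κ - l^2)*l*(Real.exp (l*x) - Real.exp (-(l*x)))) x := by
    intro x
    have hFe : F = fun t => ε * Real.exp (-(μ * t)) - c * l * (Real.exp (-(l * t)) - Real.exp (l * t))
        - l ^ 2 * (Real.exp (-(l * t)) + Real.exp (l * t))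
        + κ * (Real.exp (-(l * t)) + Real.exp (l * t) - 2) := funext hF
    rw [hFe]
    have e1 : HasDerivAt (fun t => Real.exp (-(μ*t))) ((-μ) * Real.exp (-(μ*x))) x := by
      simpa [neg_mul] using hde_aux (-μ) x
    have e2 : HasDerivAt (fun t => Real.exp (-(l*t))) ((-l) * Real.exp (-(l*x))) x := by
      simpa [neg_mul] using hde_aux (-l) x
    have e3 := hde_aux l x
    have h := (((e1.const_mul ε).sub ((e2.sub e3).const_mul (c*l))).sub
      ((e2.add e3).const_mul (l^2))).add (((e2.add e3).sub_const 2).const_mul κ)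
    exact h.congr_deriv (by ring)
  have hF'' : ∀ x : ℝ, HasDerivAt (deriv F)
      (ε*μ^2*Real.exp (-(μ*x)) + c*l^3*(Real.exp (l*x) - Real.exp (-(l*x)))
        + (κ - l^2)*l^2*(Real.exp (l*x) + Real.exp (-(l*x)))) x := by
    intro x
    have hFd : deriv F = fun x => -(ε*μ)*Real.exp (-(μ*x))
        + c*l^2*(Real.exp (-(l*x)) + Real.exp (l*x))
        + (κ - l^2)*l*(Real.exp (l*x) - Real.exp (-(l*x))) := funext fun x => (hF' x).deriv
    rw [hFd]
    have e1 : HasDerivAt (fun t => Real.exp (-(μ*t))) ((-μ) * Real.exp (-(μ*x))) x := by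
      simpa [neg_mul] using hde_aux (-μ) x
    have e2 : HasDerivAt (fun t => Real.exp (-(l*t))) ((-l) * Real.exp (-(l*x))) x := by
      simpa [neg_mul] using hde_aux (-l) x
    have e3 := hde_aux l x
    have h := ((e1.const_mul (-(ε*μ))).add ((e2.add e3).const_mul (c*l^2))).add
      ((e3.sub e2).const_mul ((κ - l^2)*l))
    exact h.congr_deriv (by ring)
  refine ⟨?_, ?_, ?_⟩
  · rw [hF 0]
    simp only [mul_zero, neg_zero, Real.exp_zero]
    nlinarith
  · rw [(hF' 0).deriv]
    simp only [mul_zero, neg_zero, Real.exp_zero]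
    have h2 : l ^ 2 * (2 * c) < ε * μ := (lt_div_iff₀ (by positivity)).mp hcl
    nlinarith
  · intro t ht
    rw [(hF'' t).deriv]
    have h1 : Real.exp (-(l*t)) ≤ Real.exp (l*t) := Real.exp_le_exp.mpr (by nlinarith)
    have ha : 0 < ε*μ^2*Real.exp (-(μ*t)) := by positivity
    have hb : 0 ≤ c*l^3*(Real.exp (l*t) - Real.exp (-(l*t))) := by
      apply mul_nonneg (by positivity); linarith
    have hcc : 0 < (κ - l^2)*l^2*(Real.exp (l*t) + Real.exp (-(l*t))) := by
      apply mul_pos (mul_pos (by linarith) (by positivity))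
      positivity
    linarith
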